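/- Let A ∈ ℝ^{n×n}, B ∈ ℝ^{n×p}, C ∈ ℝ^{m×n}, let v ∈ ℝ^n be a unit vector and δ > 0 with (A, C) (δ, v)-unobservable, let u ∈ ℝ^p, and let T ≥ 0 be an integer with (T+1)δ‖u‖ ≤ 1. Let W ∈ ℝ^{n×n} be any matrix with W W^⊤ = B B^⊤ (e.g. the positive semidefinite square root of BB^⊤). Set P = P_T(A, B, C), P' = P_T(A, B + v u^⊤, C), P_w = P_T(A, W, C), and define the symmetric matrices Σ = [I; P][I, P^⊤] + [0; P_w][0, P_w^⊤] + blockdiag(0, I_{m(T+1)}) and Σ' = [I; P'][I, (P')^⊤] + [0; P_w][0, P_w^⊤] + blockdiag(0, I_{m(T+1)}), where I = I_{p(T+1)}. Then (1 − 6(T+1)‖u‖δ) Σ ⪯ Σ' ⪯ (1 + 6(T+1)‖u‖δ) Σ in the Loewner (positive semidefinite) order. -/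

import Mathlib

/-- Euclidean norm of a real vector. -/
noncomputable def enormR {ι : Type*} [Fintype ι] (v : ι → ℝ) : ℝ :=
  Real.sqrt (∑ i, (v i) ^ 2)

/-- The block lower-triangular matrix `P_T(A, B, C) ∈ ℝ^{m(T+1) × p(T+1)}` whose `(i, j)` block
(for `0 ≤ i, j ≤ T`) equals `C A^{i−j−1} B` if `i > j` and `0` otherwise. -/
def Pmat (n p m T : ℕ) (A : Matrix (Fin n) (Fin n) ℝ) (B : Matrix (Fin n) (Fin p) ℝ)
    (C : Matrix (Fin m) (Fin n) ℝ) :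
    Matrix (Fin (T + 1) × Fin m) (Fin (T + 1) × Fin p) ℝ :=
  fun ir jc =>
    if (jc.1 : ℕ) < (ir.1 : ℕ) then (C * A ^ ((ir.1 : ℕ) - (jc.1 : ℕ) - 1) * B) ir.2 jc.2 else 0

/-- The covariance matrix `Σ = [I; P][I, Pᵀ] + [0; P_w][0, P_wᵀ] + blockdiag(0, I)` of the joint
input–observation vector of the linear dynamical system `L(A, B, C, 0)` with input covariance
`I`, observation-noise covariance `I` and process noise `W W'ᵀ`, where `P = P_T(A, B, C)` and
`P_w = P_T(A, W, C)`. -/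
noncomputable def SigmaMat (n p m T : ℕ) (A : Matrix (Fin n) (Fin n) ℝ)
    (B : Matrix (Fin n) (Fin p) ℝ) (C : Matrix (Fin m) (Fin n) ℝ)
    (W : Matrix (Fin n) (Fin n) ℝ) :
    Matrix ((Fin (T + 1) × Fin p) ⊕ (Fin (T + 1) × Fin m))
      ((Fin (T + 1) × Fin p) ⊕ (Fin (T + 1) × Fin m)) ℝ :=
  Matrix.fromBlocks 1 (Pmat n p m T A B C).transpose (Pmat n p m T A B C)
      (Pmat n p m T A B C * (Pmat n p m T A B C).transpose)
    + Matrix.fromBlocks 0 0 0 (Pmat n n m T A W C * (Pmat n n m T A W C).transpose)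
    + Matrix.fromBlocks 0 0 0 1

open Matrix

private lemma dot_self_nonneg {ι : Type*} [Fintype ι] (y : ι → ℝ) : 0 ≤ y ⬝ᵥ y :=
  Finset.sum_nonneg fun _ _ => mul_self_nonneg _

private lemma mul_vecMulVec_apply {m' n' p' : Type*} [Fintype n'] (M : Matrix m' n' ℝ)
    (v : n' → ℝ) (u : p' → ℝ) (r : m') (c : p') :
    (M * Matrix.vecMulVec v u) r c = M.mulVec v r * u c := by
  simp [Matrix.mul_apply, Matrix.vecMulVec_apply, Matrix.mulVec, dotProduct,
    Finset.sum_mul, mul_assoc]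

private lemma Pmat_add (n p m T : ℕ) (A : Matrix (Fin n) (Fin n) ℝ)
    (B B' : Matrix (Fin n) (Fin p) ℝ) (C : Matrix (Fin m) (Fin n) ℝ) :
    Pmat n p m T A (B + B') C = Pmat n p m T A B C + Pmat n p m T A B' C := by
  ext ir jc
  simp only [Pmat, Matrix.add_apply]
  split_ifs with h <;> simp [Matrix.mul_add, Matrix.add_apply]

private lemma Etb_bound (n p m T : ℕ) (A : Matrix (Fin n) (Fin n) ℝ)
    (C : Matrix (Fin m) (Fin n) ℝ) (v : Fin n → ℝ) (δ : ℝ) (hδ : 0 ≤ δ)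
    (hunobs : ∀ s : ℕ, enormR ((C * A ^ s).mulVec v) ≤ δ)
    (u : Fin p → ℝ) (b : Fin (T + 1) × Fin m → ℝ) :
    ((Pmat n p m T A (Matrix.vecMulVec v u) C)ᵀ *ᵥ b) ⬝ᵥ
      ((Pmat n p m T A (Matrix.vecMulVec v u) C)ᵀ *ᵥ b)
      ≤ ((T + 1 : ℝ) * δ * enormR u) ^ 2 * (b ⬝ᵥ b) := by
  set w : ℕ → Fin m → ℝ := fun s => (C * A ^ s).mulVec v with hwdef
  set α : Fin (T + 1) → ℝ := fun j =>
    ∑ i : Fin (T + 1), if (j : ℕ) < (i : ℕ) then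
      ∑ r, w ((i : ℕ) - (j : ℕ) - 1) r * b (i, r) else 0 with hαdef
  set nb : Fin (T + 1) → ℝ := fun i => Real.sqrt (∑ r, b (i, r) ^ 2) with hnbdef
  have hEt : ∀ (j : Fin (T + 1)) (c : Fin p),
      ((Pmat n p m T A (Matrix.vecMulVec v u) C)ᵀ *ᵥ b) (j, c) = α j * u c := by
    intro j c
    have hterm : ∀ i : Fin (T + 1), (∑ r : Fin m,
        (Pmat n p m T A (Matrix.vecMulVec v u) C) (i, r) (j, c) * b (i, r))
        = (if (j : ℕ) < (i : ℕ) then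
            ∑ r, w ((i : ℕ) - (j : ℕ) - 1) r * b (i, r) else 0) * u c := by
      intro i
      by_cases h : (j : ℕ) < (i : ℕ)
      · simp only [Pmat, h, if_true, mul_vecMulVec_apply, Finset.sum_mul]
        exact Finset.sum_congr rfl fun r _ => by ring
      · simp [Pmat, h]
    simp only [Matrix.mulVec, dotProduct, Matrix.transpose_apply]
    rw [Fintype.sum_prod_type]
    rw [Finset.sum_congr rfl fun i _ => hterm i, ← Finset.sum_mul]
  have hLHS : ((Pmat n p m T A (Matrix.vecMulVec v u) C)ᵀ *ᵥ b) ⬝ᵥ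
      ((Pmat n p m T A (Matrix.vecMulVec v u) C)ᵀ *ᵥ b)
      = (∑ j, α j ^ 2) * (∑ c, u c ^ 2) := by
    simp only [dotProduct]
    rw [Fintype.sum_prod_type, Finset.sum_mul]
    refine Finset.sum_congr rfl fun j _ => ?_
    rw [Finset.mul_sum]
    exact Finset.sum_congr rfl fun c _ => by rw [hEt j c]; ring
  have hw2 : ∀ s : ℕ, (∑ r, (w s r) ^ 2) ≤ δ ^ 2 := by
    intro s
    have h1 : Real.sqrt (∑ r, (w s r) ^ 2) ≤ δ := hunobs s
    have h0 : 0 ≤ ∑ r, (w s r) ^ 2 := Finset.sum_nonneg fun _ _ => sq_nonneg _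
    calc (∑ r, (w s r) ^ 2) = Real.sqrt (∑ r, (w s r) ^ 2) ^ 2 := (Real.sq_sqrt h0).symm
    _ ≤ δ ^ 2 := pow_le_pow_left₀ (Real.sqrt_nonneg _) h1 2
  have hnb0 : ∀ i, 0 ≤ nb i := fun i => Real.sqrt_nonneg _
  have hnb2 : ∀ i, nb i ^ 2 = ∑ r, b (i, r) ^ 2 := fun i =>
    Real.sq_sqrt (Finset.sum_nonneg fun _ _ => sq_nonneg _)
  have hinner : ∀ (i : Fin (T + 1)) (s : ℕ), |∑ r, w s r * b (i, r)| ≤ δ * nb i := by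
    intro i s
    have hcs := Finset.sum_mul_sq_le_sq_mul_sq Finset.univ (w s) (fun r => b (i, r))
    have h2 : (∑ r, w s r * b (i, r)) ^ 2 ≤ (δ * nb i) ^ 2 := by
      calc (∑ r, w s r * b (i, r)) ^ 2 ≤ (∑ r, (w s r) ^ 2) * (∑ r, b (i, r) ^ 2) := hcs
      _ ≤ δ ^ 2 * (∑ r, b (i, r) ^ 2) :=
          mul_le_mul_of_nonneg_right (hw2 s) (Finset.sum_nonneg fun _ _ => sq_nonneg _)
      _ = (δ * nb i) ^ 2 := by rw [mul_pow, hnb2]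
    exact abs_le_of_sq_le_sq h2 (mul_nonneg hδ (hnb0 i))
  set S := ∑ i, nb i with hSdef
  have hS0 : 0 ≤ S := Finset.sum_nonneg fun i _ => hnb0 i
  have hαb : ∀ j, α j ^ 2 ≤ (δ * S) ^ 2 := by
    intro j
    have h1 : |α j| ≤ δ * S := by
      calc |α j| ≤ ∑ i : Fin (T + 1), |if (j : ℕ) < (i : ℕ) then
          ∑ r, w ((i : ℕ) - (j : ℕ) - 1) r * b (i, r) else 0| :=
        Finset.abs_sum_le_sum_abs _ _
      _ ≤ ∑ i, δ * nb i := by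
          refine Finset.sum_le_sum fun i _ => ?_
          by_cases h : (j : ℕ) < (i : ℕ)
          · simpa [h] using hinner i ((i : ℕ) - (j : ℕ) - 1)
          · simp only [h, if_false, abs_zero]
            exact mul_nonneg hδ (hnb0 i)
      _ = δ * S := by rw [← Finset.mul_sum]
    calc α j ^ 2 = |α j| ^ 2 := (sq_abs _).symm
    _ ≤ (δ * S) ^ 2 := pow_le_pow_left₀ (abs_nonneg _) h1 2
  have hsum_α : (∑ j, α j ^ 2) ≤ (T + 1 : ℝ) * (δ * S) ^ 2 := by
    calc (∑ j : Fin (T + 1), α j ^ 2) ≤ ∑ _j : Fin (T + 1), (δ * S) ^ 2 :=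
      Finset.sum_le_sum fun j _ => hαb j
    _ = (T + 1 : ℝ) * (δ * S) ^ 2 := by
        simp [Finset.sum_const, Fintype.card_fin, nsmul_eq_mul]
  have hS2 : S ^ 2 ≤ (T + 1 : ℝ) * ∑ i, nb i ^ 2 := by
    have h := Finset.sum_mul_sq_le_sq_mul_sq Finset.univ (fun _ : Fin (T + 1) => (1 : ℝ)) nb
    simp only [one_mul, one_pow, Finset.sum_const, Finset.card_univ, Fintype.card_fin,
      nsmul_eq_mul, mul_one] at h
    push_cast at h
    exact h
  have hb : b ⬝ᵥ b = ∑ i, ∑ r, b (i, r) ^ 2 := by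
    simp only [dotProduct]
    rw [Fintype.sum_prod_type]
    exact Finset.sum_congr rfl fun i _ => Finset.sum_congr rfl fun r _ => (pow_two _).symm
  have hU0 : 0 ≤ ∑ c, u c ^ 2 := Finset.sum_nonneg fun _ _ => sq_nonneg _
  have hβ0 : 0 ≤ ∑ i, ∑ r, b (i, r) ^ 2 :=
    Finset.sum_nonneg fun _ _ => Finset.sum_nonneg fun _ _ => sq_nonneg _
  have hu2 : enormR u ^ 2 = ∑ c, u c ^ 2 := Real.sq_sqrt hU0
  have hchain : (∑ j, α j ^ 2) ≤ (T + 1 : ℝ) ^ 2 * δ ^ 2 * ∑ i, ∑ r, b (i, r) ^ 2 := by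
    have h2 : S ^ 2 ≤ (T + 1 : ℝ) * ∑ i, ∑ r, b (i, r) ^ 2 := by
      calc S ^ 2 ≤ (T + 1 : ℝ) * ∑ i, nb i ^ 2 := hS2
      _ = (T + 1 : ℝ) * ∑ i, ∑ r, b (i, r) ^ 2 := by
          rw [Finset.sum_congr rfl fun i _ => hnb2 i]
    have hT0 : (0 : ℝ) ≤ (T + 1 : ℝ) := by positivity
    calc (∑ j, α j ^ 2) ≤ (T + 1 : ℝ) * (δ * S) ^ 2 := hsum_α
    _ = (T + 1 : ℝ) * (δ ^ 2 * S ^ 2) := by ring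
    _ ≤ (T + 1 : ℝ) * (δ ^ 2 * ((T + 1 : ℝ) * ∑ i, ∑ r, b (i, r) ^ 2)) := by
        refine mul_le_mul_of_nonneg_left (mul_le_mul_of_nonneg_left h2 (sq_nonneg δ)) hT0
    _ = (T + 1 : ℝ) ^ 2 * δ ^ 2 * ∑ i, ∑ r, b (i, r) ^ 2 := by ring
  rw [hLHS, hb]
  calc (∑ j, α j ^ 2) * (∑ c, u c ^ 2)
      ≤ ((T + 1 : ℝ) ^ 2 * δ ^ 2 * ∑ i, ∑ r, b (i, r) ^ 2) * (∑ c, u c ^ 2) :=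
        mul_le_mul_of_nonneg_right hchain hU0
  _ = ((T + 1 : ℝ) * δ * enormR u) ^ 2 * ∑ i, ∑ r, b (i, r) ^ 2 := by
      rw [mul_pow, mul_pow, hu2]; ring

open Matrix

private lemma scalar_sandwich (ε X Y cr β : ℝ) (hε : 0 ≤ ε) (hε1 : ε ≤ 1)
    (hX : 0 ≤ X) (hY0 : 0 ≤ Y) (hβ : 0 ≤ β) (hY : Y ≤ ε ^ 2 * β) (hcs : cr ^ 2 ≤ X * Y) :
    (1 - 6 * ε) * (X + β) ≤ X + 2 * cr + Y + β ∧
      X + 2 * cr + Y + β ≤ (1 + 6 * ε) * (X + β) := by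
  have hXY : cr ^ 2 ≤ X * (ε ^ 2 * β) := hcs.trans (mul_le_mul_of_nonneg_left hY hX)
  have hρ0 : 0 ≤ ε * (X + β) := mul_nonneg hε (add_nonneg hX hβ)
  have h4 : (2 * cr) ^ 2 ≤ (ε * (X + β)) ^ 2 := by nlinarith [sq_nonneg (ε * (X - β))]
  have h5 := abs_le_of_sq_le_sq' h4 hρ0
  have hY2 : Y ≤ ε * (X + β) := by
    nlinarith [mul_nonneg hε hX, mul_nonneg hε hβ, mul_nonneg (mul_nonneg hε hβ) (sub_nonneg.2 hε1)]
  constructor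
  · nlinarith [h5.1, hρ0]
  · nlinarith [h5.2, hρ0]

private lemma sandwich_aux {k l : Type*} [Fintype k] [Fintype l]
    (M F : Matrix k l ℝ) (D : Matrix k k ℝ) (ε : ℝ) (hε : 0 ≤ ε) (hε1 : ε ≤ 1)
    (hD : Dᵀ = D) (hDq : ∀ x : k → ℝ, 0 ≤ x ⬝ᵥ (D *ᵥ x))
    (hF : ∀ x : k → ℝ, ((Fᵀ *ᵥ x) ⬝ᵥ (Fᵀ *ᵥ x)) ≤ ε ^ 2 * (x ⬝ᵥ (D *ᵥ x))) :
    ((((M + F) * (M + F)ᵀ + D) - (1 - 6 * ε) • (M * Mᵀ + D)).PosSemidef) ∧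
    (((1 + 6 * ε) • (M * Mᵀ + D) - ((M + F) * (M + F)ᵀ + D)).PosSemidef) := by
  have htr : ∀ G : Matrix k l ℝ, (G * Gᵀ + D)ᵀ = G * Gᵀ + D := by
    intro G
    rw [Matrix.transpose_add, Matrix.transpose_mul, Matrix.transpose_transpose, hD]
  have hquad : ∀ (G : Matrix k l ℝ) (x : k → ℝ),
      x ⬝ᵥ ((G * Gᵀ + D) *ᵥ x) = ((Gᵀ *ᵥ x) ⬝ᵥ (Gᵀ *ᵥ x)) + x ⬝ᵥ (D *ᵥ x) := by
    intro G x
    rw [Matrix.add_mulVec, dotProduct_add, ← Matrix.mulVec_mulVec,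
      Matrix.dotProduct_mulVec, ← Matrix.mulVec_transpose]
  have key : ∀ x : k → ℝ,
      (1 - 6 * ε) * (x ⬝ᵥ ((M * Mᵀ + D) *ᵥ x)) ≤ x ⬝ᵥ (((M + F) * (M + F)ᵀ + D) *ᵥ x) ∧
      x ⬝ᵥ (((M + F) * (M + F)ᵀ + D) *ᵥ x) ≤ (1 + 6 * ε) * (x ⬝ᵥ ((M * Mᵀ + D) *ᵥ x)) := by
    intro x
    have hq := hquad M x
    have hq' := hquad (M + F) x
    have hMF : (M + F)ᵀ *ᵥ x = Mᵀ *ᵥ x + Fᵀ *ᵥ x := by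
      rw [Matrix.transpose_add, Matrix.add_mulVec]
    rw [hMF] at hq'
    have hexp : (Mᵀ *ᵥ x + Fᵀ *ᵥ x) ⬝ᵥ (Mᵀ *ᵥ x + Fᵀ *ᵥ x)
        = (Mᵀ *ᵥ x) ⬝ᵥ (Mᵀ *ᵥ x) + 2 * ((Mᵀ *ᵥ x) ⬝ᵥ (Fᵀ *ᵥ x))
          + (Fᵀ *ᵥ x) ⬝ᵥ (Fᵀ *ᵥ x) := by
      rw [add_dotProduct, dotProduct_add, dotProduct_add,
        dotProduct_comm (Fᵀ *ᵥ x) (Mᵀ *ᵥ x)]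
      ring
    rw [hexp] at hq'
    have hcs : ((Mᵀ *ᵥ x) ⬝ᵥ (Fᵀ *ᵥ x)) ^ 2
        ≤ ((Mᵀ *ᵥ x) ⬝ᵥ (Mᵀ *ᵥ x)) * ((Fᵀ *ᵥ x) ⬝ᵥ (Fᵀ *ᵥ x)) := by
      have h := Finset.sum_mul_sq_le_sq_mul_sq Finset.univ (Mᵀ *ᵥ x) (Fᵀ *ᵥ x)
      simpa [dotProduct, pow_two] using h
    have hs := scalar_sandwich ε ((Mᵀ *ᵥ x) ⬝ᵥ (Mᵀ *ᵥ x)) ((Fᵀ *ᵥ x) ⬝ᵥ (Fᵀ *ᵥ x))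
      ((Mᵀ *ᵥ x) ⬝ᵥ (Fᵀ *ᵥ x)) (x ⬝ᵥ (D *ᵥ x)) hε hε1 (dot_self_nonneg _)
      (dot_self_nonneg _) (hDq x) (hF x) hcs
    rw [hq, hq']
    exact hs
  have hstar : ∀ x : k → ℝ, star x = x := fun x => funext fun i => star_trivial (x i)
  refine ⟨Matrix.posSemidef_iff_dotProduct_mulVec.2 ⟨?_, fun x => ?_⟩,
    Matrix.posSemidef_iff_dotProduct_mulVec.2 ⟨?_, fun x => ?_⟩⟩
  · rw [Matrix.IsHermitian, Matrix.conjTranspose_eq_transpose_of_trivial,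
      Matrix.transpose_sub, Matrix.transpose_smul, htr, htr]
  · rw [hstar, Matrix.sub_mulVec, dotProduct_sub, Matrix.smul_mulVec,
      dotProduct_smul, smul_eq_mul]
    linarith [(key x).1]
  · rw [Matrix.IsHermitian, Matrix.conjTranspose_eq_transpose_of_trivial,
      Matrix.transpose_sub, Matrix.transpose_smul, htr, htr]
  · rw [hstar, Matrix.sub_mulVec, dotProduct_sub, Matrix.smul_mulVec,
      dotProduct_smul, smul_eq_mul]
    linarith [(key x).2]

private lemma sigma_decomp (n p m T : ℕ) (A : Matrix (Fin n) (Fin n) ℝ)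
    (B : Matrix (Fin n) (Fin p) ℝ) (C : Matrix (Fin m) (Fin n) ℝ)
    (W : Matrix (Fin n) (Fin n) ℝ) :
    SigmaMat n p m T A B C W =
      (Matrix.fromBlocks (1 : Matrix (Fin (T+1) × Fin p) (Fin (T+1) × Fin p) ℝ)
          (0 : Matrix (Fin (T+1) × Fin p) (Fin (T+1) × Fin n) ℝ)
          (Pmat n p m T A B C) (Pmat n n m T A W C)) *
        (Matrix.fromBlocks (1 : Matrix (Fin (T+1) × Fin p) (Fin (T+1) × Fin p) ℝ)
          (0 : Matrix (Fin (T+1) × Fin p) (Fin (T+1) × Fin n) ℝ)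
          (Pmat n p m T A B C) (Pmat n n m T A W C))ᵀ +
      Matrix.fromBlocks 0 0 0 1 := by
  rw [SigmaMat, Matrix.fromBlocks_transpose, Matrix.fromBlocks_multiply]
  simp [Matrix.fromBlocks_add]


private def Mblk (n p m T : ℕ) (A : Matrix (Fin n) (Fin n) ℝ) (B : Matrix (Fin n) (Fin p) ℝ)
    (C : Matrix (Fin m) (Fin n) ℝ) (W : Matrix (Fin n) (Fin n) ℝ) :
    Matrix ((Fin (T + 1) × Fin p) ⊕ (Fin (T + 1) × Fin m))
      ((Fin (T + 1) × Fin p) ⊕ (Fin (T + 1) × Fin n)) ℝ :=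
  Matrix.fromBlocks 1 0 (Pmat n p m T A B C) (Pmat n n m T A W C)

private def Fblk (n p m T : ℕ) (A : Matrix (Fin n) (Fin n) ℝ) (v : Fin n → ℝ) (u : Fin p → ℝ)
    (C : Matrix (Fin m) (Fin n) ℝ) :
    Matrix ((Fin (T + 1) × Fin p) ⊕ (Fin (T + 1) × Fin m))
      ((Fin (T + 1) × Fin p) ⊕ (Fin (T + 1) × Fin n)) ℝ :=
  Matrix.fromBlocks 0 0 (Pmat n p m T A (Matrix.vecMulVec v u) C) 0

private def Dblk (p m T : ℕ) :
    Matrix ((Fin (T + 1) × Fin p) ⊕ (Fin (T + 1) × Fin m))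
      ((Fin (T + 1) × Fin p) ⊕ (Fin (T + 1) × Fin m)) ℝ :=
  Matrix.fromBlocks 0 0 0 1

private lemma sigma_decomp' (n p m T : ℕ) (A : Matrix (Fin n) (Fin n) ℝ)
    (B : Matrix (Fin n) (Fin p) ℝ) (C : Matrix (Fin m) (Fin n) ℝ)
    (W : Matrix (Fin n) (Fin n) ℝ) :
    SigmaMat n p m T A B C W =
      Mblk n p m T A B C W * (Mblk n p m T A B C W)ᵀ + Dblk p m T := by
  rw [Mblk, Dblk]
  exact sigma_decomp n p m T A B C W

private lemma Mblk_add (n p m T : ℕ) (A : Matrix (Fin n) (Fin n) ℝ)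
    (B : Matrix (Fin n) (Fin p) ℝ) (v : Fin n → ℝ) (u : Fin p → ℝ)
    (C : Matrix (Fin m) (Fin n) ℝ) (W : Matrix (Fin n) (Fin n) ℝ) :
    Mblk n p m T A (B + Matrix.vecMulVec v u) C W =
      Mblk n p m T A B C W + Fblk n p m T A v u C := by
  rw [Mblk, Mblk, Fblk, Pmat_add]
  simp [Matrix.fromBlocks_add]


/-- If `(A, C)` is `(δ, v)`-unobservable with `v` a unit vector, `u ∈ ℝ^p`, and
`T ≥ 0` with `(T+1) δ ‖u‖ ≤ 1`, then with `W W ᵀ = B Bᵀ`, the covariance matrices `Σ` (for the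
system with input matrix `B`) and `Σ'` (for the system with input matrix `B + v uᵀ`) satisfy
`(1 − 6(T+1)‖u‖δ) Σ ⪯ Σ' ⪯ (1 + 6(T+1)‖u‖δ) Σ` in the Loewner order. -/
theorem covariance_sandwich_of_unobservable (n p m : ℕ)
    (A : Matrix (Fin n) (Fin n) ℝ) (B : Matrix (Fin n) (Fin p) ℝ)
    (C : Matrix (Fin m) (Fin n) ℝ)
    (v : Fin n → ℝ) (δ : ℝ) (hδ : 0 < δ)
    (hv : enormR v = 1)
    (hunobs : ∀ s : ℕ, enormR ((C * A ^ s).mulVec v) ≤ δ)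
    (u : Fin p → ℝ) (T : ℕ)
    (hT : (T + 1 : ℝ) * δ * enormR u ≤ 1)
    (W : Matrix (Fin n) (Fin n) ℝ) (hW : W * W.transpose = B * B.transpose) :
    (SigmaMat n p m T A (B + Matrix.vecMulVec v u) C W
        - (1 - 6 * (T + 1 : ℝ) * enormR u * δ) • SigmaMat n p m T A B C W).PosSemidef ∧
      ((1 + 6 * (T + 1 : ℝ) * enormR u * δ) • SigmaMat n p m T A B C W
        - SigmaMat n p m T A (B + Matrix.vecMulVec v u) C W).PosSemidef := by
  have hε0 : 0 ≤ (T + 1 : ℝ) * δ * enormR u := by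
    have h1 : (0 : ℝ) ≤ enormR u := Real.sqrt_nonneg _
    positivity
  have hD : (Dblk p m T)ᵀ = Dblk p m T := by
    rw [Dblk, Matrix.fromBlocks_transpose]
    simp
  have hDx : ∀ x : ((Fin (T + 1) × Fin p) ⊕ (Fin (T + 1) × Fin m)) → ℝ,
      x ⬝ᵥ (Dblk p m T *ᵥ x) = (x ∘ Sum.inr) ⬝ᵥ (x ∘ Sum.inr) := by
    intro x
    rw [Dblk, Matrix.fromBlocks_mulVec]
    simp [dotProduct, Fintype.sum_sum_type, Function.comp]
  have hDq : ∀ x : ((Fin (T + 1) × Fin p) ⊕ (Fin (T + 1) × Fin m)) → ℝ,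
      0 ≤ x ⬝ᵥ (Dblk p m T *ᵥ x) := fun x => by
    rw [hDx x]; exact dot_self_nonneg _
  have hF : ∀ x : ((Fin (T + 1) × Fin p) ⊕ (Fin (T + 1) × Fin m)) → ℝ,
      (((Fblk n p m T A v u C)ᵀ *ᵥ x) ⬝ᵥ ((Fblk n p m T A v u C)ᵀ *ᵥ x))
        ≤ ((T + 1 : ℝ) * δ * enormR u) ^ 2 * (x ⬝ᵥ (Dblk p m T *ᵥ x)) := by
    intro x
    have hFt : (Fblk n p m T A v u C)ᵀ *ᵥ x
        = Sum.elim ((Pmat n p m T A (Matrix.vecMulVec v u) C)ᵀ *ᵥ (x ∘ Sum.inr)) 0 := by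
      rw [Fblk, Matrix.fromBlocks_transpose, Matrix.fromBlocks_mulVec]
      simp
    rw [hFt, hDx, sumElim_dotProduct_sumElim, dotProduct_zero, add_zero]
    exact Etb_bound n p m T A C v δ hδ.le hunobs u (x ∘ Sum.inr)
  obtain ⟨h1, h2⟩ := sandwich_aux (Mblk n p m T A B C W) (Fblk n p m T A v u C)
    (Dblk p m T) ((T + 1 : ℝ) * δ * enormR u) hε0 hT hD hDq hF
  rw [sigma_decomp' n p m T A (B + Matrix.vecMulVec v u) C W, sigma_decomp' n p m T A B C W,
    Mblk_add,
    show (1 - 6 * (T + 1 : ℝ) * enormR u * δ) = 1 - 6 * ((T + 1 : ℝ) * δ * enormR u) from by ring,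
    show (1 + 6 * (T + 1 : ℝ) * enormR u * δ) = 1 + 6 * ((T + 1 : ℝ) * δ * enormR u) from by ring]
  exact ⟨h1, h2⟩
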